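/- Let α be a finite set, let P be a probability mass function on α, let n ≥ 1, let X₁, …, Xₙ be i.i.d. with law P, and let μ > 0. Then Pr[ there exists a ∈ α with |π̂(a) − P(a)| > μ ] ≤ |α| / (4 μ² n), where π̂ denotes the empirical type of (X₁,…,Xₙ). -/

import Mathlib

/-!
STATEMENT 15: For i.i.d. `X₁,…,Xₙ ∼ P` on a finite set `α` (modelled by the product pmf on
`Fin n → α`) and `μ > 0`,
`Pr[∃ a, |π̂(a) - P(a)| > μ] ≤ |α| / (4μ²n)`, where `π̂` is the empirical type of `(X₁,…,Xₙ)`.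
-/

open scoped BigOperators Classical

/-- `P` is a probability mass function on the finite set `Z`. -/
def IsPmf {Z : Type*} [Fintype Z] (P : Z → ℝ) : Prop :=
  (∀ z, 0 ≤ P z) ∧ ∑ z, P z = 1

/-- The `n`-fold product pmf on `Fin n → Z`. -/
noncomputable def prodPmf {Z : Type*} [Fintype Z] (P : Z → ℝ) (n : ℕ) : (Fin n → Z) → ℝ :=
  fun x => ∏ i, P (x i)

/-- The empirical type of the sequence `x ∈ αⁿ`. -/
noncomputable def empType {α : Type*} [Fintype α] {n : ℕ} (x : Fin n → α) : α → ℝ :=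
  fun a => ((Finset.univ.filter fun i => x i = a).card : ℝ) / n

lemma var_eq {α : Type*} [Fintype α] (P : α → ℝ) (hP : IsPmf P) (n : ℕ) (a : α) :
    ∑ x : Fin n → α, prodPmf P n x *
      (∑ i, ((if x i = a then (1:ℝ) else 0) - P a))^2 = n * (P a * (1 - P a)) := by
  classical
  set p := P a with hp
  set Y : α → ℝ := fun z => (if z = a then (1:ℝ) else 0) - p with hY
  have hsum1 : ∑ z, P z * Y z = 0 := by
    have : ∀ z, P z * Y z = (if z = a then P z else 0) - P z * p := by
      intro z; simp only [hY]; split <;> ring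
    simp only [this, Finset.sum_sub_distrib, Finset.sum_ite_eq', Finset.mem_univ, if_true,
      ← Finset.sum_mul, hP.2]
    ring
  have hsum2 : ∑ z, P z * Y z * Y z = p * (1 - p) := by
    have : ∀ z, P z * Y z * Y z = P z * p^2 + (if z = a then P z * (1 - 2*p) else 0) := by
      intro z; simp only [hY]; split <;> ring
    simp only [this, Finset.sum_add_distrib, Finset.sum_ite_eq', Finset.mem_univ, if_true,
      ← Finset.sum_mul, hP.2]
    ring
  have key : ∀ i j : Fin n,
      (∑ x : Fin n → α, (∏ k, P (x k)) * (Y (x i) * Y (x j)))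
        = if i = j then p * (1 - p) else 0 := by
    intro i j
    set g : Fin n → α → ℝ := fun k z =>
      P z * (if k = i then Y z else 1) * (if k = j then Y z else 1) with hg
    have h1 : ∀ x : Fin n → α, (∏ k, P (x k)) * (Y (x i) * Y (x j)) = ∏ k, g k (x k) := by
      intro x
      simp only [hg, Finset.prod_mul_distrib, Finset.prod_ite_eq', Finset.mem_univ, if_true]
      ring
    rw [Finset.sum_congr rfl fun x _ => h1 x, ← Fintype.prod_sum g]
    by_cases hij : i = j
    · subst hij
      rw [if_pos rfl]
      rw [Finset.prod_eq_single_of_mem i (Finset.mem_univ i)]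
      · simp only [hg, if_pos rfl]
        exact hsum2
      · intro k _ hk
        simp only [hg, if_neg hk, mul_one]
        exact hP.2
    · rw [if_neg hij]
      apply Finset.prod_eq_zero (Finset.mem_univ i)
      simp only [hg, if_pos rfl, if_neg hij, mul_one]
      exact hsum1
  have expand : ∀ x : Fin n → α, prodPmf P n x * (∑ i, Y (x i))^2
      = ∑ i : Fin n, ∑ j : Fin n, (∏ k, P (x k)) * (Y (x i) * Y (x j)) := by
    intro x
    simp only [prodPmf]
    rw [sq, Finset.sum_mul_sum, Finset.mul_sum]
    exact Finset.sum_congr rfl fun i _ => Finset.mul_sum _ _ _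
  calc ∑ x : Fin n → α, prodPmf P n x * (∑ i, Y (x i))^2
      = ∑ i : Fin n, ∑ j : Fin n, ∑ x : Fin n → α, (∏ k, P (x k)) * (Y (x i) * Y (x j)) := by
        rw [Finset.sum_congr rfl fun x _ => expand x, Finset.sum_comm]
        exact Finset.sum_congr rfl fun i _ => Finset.sum_comm
    _ = ∑ i : Fin n, ∑ j : Fin n, if i = j then p * (1 - p) else 0 := by
        exact Finset.sum_congr rfl fun i _ => Finset.sum_congr rfl fun j _ => key i j
    _ = n * (p * (1 - p)) := by
        simp [Finset.sum_ite_eq', Finset.mem_univ, mul_comm]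

lemma cheb {α : Type*} [Fintype α] (P : α → ℝ) (hP : IsPmf P) (n : ℕ) (hn : 1 ≤ n)
    (μ : ℝ) (hμ : 0 < μ) (a : α) :
    ∑ x ∈ Finset.univ.filter (fun x : Fin n → α => μ < |empType x a - P a|),
      prodPmf P n x ≤ 1 / (4 * μ ^ 2 * n) := by
  classical
  have hnpos : (0:ℝ) < n := by exact_mod_cast hn
  have hprodnn : ∀ x : Fin n → α, 0 ≤ prodPmf P n x := fun x =>
    Finset.prod_nonneg fun i _ => hP.1 _
  have hdiff : ∀ x : Fin n → α,
      empType x a - P a = (∑ i, ((if x i = a then (1:ℝ) else 0) - P a)) / n := by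
    intro x
    have hb : ∑ i : Fin n, (if x i = a then (1:ℝ) else 0)
        = ((Finset.univ.filter fun i => x i = a).card : ℝ) := by
      simp [Finset.sum_boole]
    rw [Finset.sum_sub_distrib, hb, Finset.sum_const, Finset.card_univ, Fintype.card_fin]
    field_simp [empType]
    simp only [empType, nsmul_eq_mul]
    rw [sub_mul, div_mul_cancel₀ _ hnpos.ne']
    ring
  have hvar : ∑ x : Fin n → α, prodPmf P n x * (empType x a - P a)^2
      = P a * (1 - P a) / n := by
    have := var_eq P hP n a
    calc ∑ x : Fin n → α, prodPmf P n x * (empType x a - P a)^2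
        = (∑ x : Fin n → α, prodPmf P n x *
            (∑ i, ((if x i = a then (1:ℝ) else 0) - P a))^2) / n^2 := by
          rw [Finset.sum_div]
          refine Finset.sum_congr rfl fun x _ => ?_
          rw [hdiff x, div_pow]
          ring
      _ = (n * (P a * (1 - P a))) / n^2 := by rw [this]
      _ = P a * (1 - P a) / n := by field_simp
  set S := ∑ x ∈ Finset.univ.filter (fun x : Fin n → α => μ < |empType x a - P a|),
      prodPmf P n x with hS
  have h1 : μ^2 * S ≤ ∑ x : Fin n → α, prodPmf P n x * (empType x a - P a)^2 := by
    rw [hS, Finset.mul_sum]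
    refine le_trans (Finset.sum_le_sum ?_)
      (Finset.sum_le_sum_of_subset_of_nonneg (Finset.subset_univ _) ?_)
    · intro x hx
      rw [Finset.mem_filter] at hx
      have habs : μ ^ 2 ≤ |empType x a - P a| ^ 2 := by
        have := hx.2
        nlinarith [abs_nonneg (empType x a - P a)]
      rw [sq_abs] at habs
      calc μ^2 * prodPmf P n x ≤ (empType x a - P a)^2 * prodPmf P n x :=
            mul_le_mul_of_nonneg_right habs (hprodnn x)
        _ = prodPmf P n x * (empType x a - P a)^2 := by ring
    · intro x _ _
      exact mul_nonneg (hprodnn x) (sq_nonneg _)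
  have hP1 : P a ≤ 1 := by
    rw [← hP.2]
    exact Finset.single_le_sum (fun z _ => hP.1 z) (Finset.mem_univ a)
  have hpq : P a * (1 - P a) ≤ 1/4 := by nlinarith [sq_nonneg (P a - 1/2)]
  have h2 : μ^2 * S ≤ 1 / (4 * n) := by
    rw [hvar] at h1
    calc μ^2 * S ≤ P a * (1 - P a) / n := h1
      _ ≤ (1/4) / n := by gcongr
      _ = 1 / (4 * n) := by ring
  rw [le_div_iff₀ (by positivity)]
  have h3 := mul_le_mul_of_nonneg_left h2 (le_of_lt (show (0:ℝ) < 4*n by positivity))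
  calc S * (4 * μ ^ 2 * n) = (4*(n:ℝ)) * (μ^2 * S) := by push_cast; ring
    _ ≤ (4*(n:ℝ)) * (1/(4*(n:ℝ))) := h3
    _ = 1 := by field_simp

theorem prob_empType_far_le {α : Type*} [Fintype α]
    (P : α → ℝ) (hP : IsPmf P) (n : ℕ) (hn : 1 ≤ n) (μ : ℝ) (hμ : 0 < μ) :
    ∑ x ∈ Finset.univ.filter (fun x : Fin n → α => ∃ a, μ < |empType x a - P a|),
      prodPmf P n x ≤ (Fintype.card α : ℝ) / (4 * μ ^ 2 * n) := by
  classical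
  have hprodnn : ∀ x : Fin n → α, 0 ≤ prodPmf P n x := fun x =>
    Finset.prod_nonneg fun i _ => hP.1 _
  have hub : ∑ x ∈ Finset.univ.filter (fun x : Fin n → α => ∃ a, μ < |empType x a - P a|),
      prodPmf P n x ≤ ∑ a : α, ∑ x ∈ Finset.univ.filter
        (fun x : Fin n → α => μ < |empType x a - P a|), prodPmf P n x := by
    rw [Finset.sum_filter]
    have hrw : ∀ a : α, (∑ x ∈ Finset.univ.filter
        (fun x : Fin n → α => μ < |empType x a - P a|), prodPmf P n x)
        = ∑ x : Fin n → α, if μ < |empType x a - P a| then prodPmf P n x else 0 :=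
      fun a => Finset.sum_filter _ _
    simp only [hrw]
    rw [Finset.sum_comm]
    refine Finset.sum_le_sum fun x _ => ?_
    have hnn : ∀ b : α, b ∈ Finset.univ →
        (0:ℝ) ≤ if μ < |empType x b - P b| then prodPmf P n x else 0 := by
      intro b _
      split
      · exact hprodnn x
      · exact le_rfl
    by_cases h : ∃ a, μ < |empType x a - P a|
    · rw [if_pos h]
      obtain ⟨a, ha⟩ := h
      have := Finset.single_le_sum (f := fun a : α =>
          if μ < |empType x a - P a| then prodPmf P n x else 0) hnn (Finset.mem_univ a)
      simpa [if_pos ha] using this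
    · rw [if_neg h]
      exact Finset.sum_nonneg hnn
  refine hub.trans ?_
  have hbd : ∀ a : α, (∑ x ∈ Finset.univ.filter
      (fun x : Fin n → α => μ < |empType x a - P a|), prodPmf P n x) ≤ 1 / (4 * μ ^ 2 * n) :=
    fun a => cheb P hP n hn μ hμ a
  calc ∑ a : α, ∑ x ∈ Finset.univ.filter
        (fun x : Fin n → α => μ < |empType x a - P a|), prodPmf P n x
      ≤ ∑ _a : α, 1 / (4 * μ ^ 2 * n) := Finset.sum_le_sum fun a _ => hbd a
    _ = (Fintype.card α : ℝ) / (4 * μ ^ 2 * n) := by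
        rw [Finset.sum_const, Finset.card_univ, nsmul_eq_mul]
        ring
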